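/- Let P ∈ ℝ^{m×S} be a row-stochastic matrix (every column has a positive entry) where each row has at most U nonzero entries. If P = Φᵀ M with Φ ∈ ℝ^{d×m} and M ∈ ℝ^{d×S}, then d ≥ ⌊S/U⌋. -/

import Mathlib

open Matrix Finset

/-- If a row-stochastic matrix `P ∈ ℝ^{m×S}` (every column has a positive entry,
each row at most `U` nonzero entries) factors as `P = Φᵀ M` with `Φ ∈ ℝ^{d×m}`,
`M ∈ ℝ^{d×S}`, then `d ≥ ⌊S/U⌋`. -/
theorem stmt1 (m S U d : ℕ) (P : Matrix (Fin m) (Fin S) ℝ)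
    (Φ : Matrix (Fin d) (Fin m) ℝ) (M : Matrix (Fin d) (Fin S) ℝ)
    (hnn : ∀ i j, 0 ≤ P i j)
    (hrow : ∀ i, ∑ j, P i j = 1)
    (hcol : ∀ j, ∃ i, 0 < P i j)
    (hU : ∀ i, (Finset.univ.filter (fun j => P i j ≠ 0)).card ≤ U)
    (hfac : P = Φ.transpose * M) :
    S / U ≤ d := by
  -- rows of P lie in span of rows of M
  have hrow_mem : ∀ i, P i ∈ Submodule.span ℝ (Set.range M) := by
    intro i
    have hPi : P i = ∑ k, Φ k i • M k := by
      funext j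
      simp [hfac, Matrix.mul_apply, Matrix.transpose_apply, Finset.sum_apply]
    rw [hPi]
    exact Submodule.sum_mem _ fun k _ =>
      Submodule.smul_mem _ _ (Submodule.subset_span ⟨k, rfl⟩)
  obtain ⟨t, hts, hspan, hli⟩ := exists_linearIndependent ℝ (Set.range P)
  have htfin : t.Finite := (Set.finite_range P).subset hts
  haveI : Fintype t := htfin.fintype
  -- card t ≤ d
  have hcard : t.toFinset.card ≤ d := by
    have h1 : Module.finrank ℝ (Submodule.span ℝ t) = t.toFinset.card :=
      finrank_span_set_eq_card hli
    have h2 : Submodule.span ℝ t ≤ Submodule.span ℝ (Set.range M) := by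
      rw [hspan]
      refine Submodule.span_le.2 ?_
      rintro _ ⟨i, rfl⟩
      exact hrow_mem i
    have h3 : Module.finrank ℝ (Submodule.span ℝ (Set.range M)) ≤ d := by
      classical
      haveI : Fintype (Set.range M) := Set.fintypeRange _
      have := finrank_span_le_card (R := ℝ) (Set.range M)
      calc Module.finrank ℝ (Submodule.span ℝ (Set.range M))
          ≤ (Set.range M).toFinset.card := this
        _ ≤ d := by
            rw [Set.toFinset_card]
            simpa using Fintype.card_range_le M
    have := Submodule.finrank_mono h2
    omega
  -- supports of t cover all columns
  have hcover : (univ : Finset (Fin S)) ⊆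
      t.toFinset.biUnion (fun v => univ.filter (fun j => v j ≠ 0)) := by
    intro j _
    obtain ⟨i, hi⟩ := hcol j
    have hmem : P i ∈ Submodule.span ℝ t := by
      rw [hspan]; exact Submodule.subset_span ⟨i, rfl⟩
    by_contra hjn
    simp only [Finset.mem_biUnion, Finset.mem_filter, Finset.mem_univ, true_and,
      not_exists, not_and, not_not, Set.mem_toFinset] at hjn
    -- all v ∈ t vanish at j, so span vanishes at j
    have hker : Submodule.span ℝ t ≤ LinearMap.ker (LinearMap.proj (R := ℝ)
        (φ := fun _ : Fin S => ℝ) j) := by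
      refine Submodule.span_le.2 ?_
      intro v hv
      simp [LinearMap.mem_ker, hjn v hv]
    have := hker hmem
    simp [LinearMap.mem_ker] at this
    rw [this] at hi
    exact lt_irrefl 0 hi
  have hSle : S ≤ t.toFinset.card * U := by
    calc S = (univ : Finset (Fin S)).card := by simp
      _ ≤ (t.toFinset.biUnion (fun v => univ.filter (fun j => v j ≠ 0))).card :=
          Finset.card_le_card hcover
      _ ≤ ∑ v ∈ t.toFinset, (univ.filter (fun j => v j ≠ 0)).card :=
          Finset.card_biUnion_le
      _ ≤ ∑ v ∈ t.toFinset, U := by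
          refine Finset.sum_le_sum fun v hv => ?_
          obtain ⟨i, rfl⟩ := hts (Set.mem_toFinset.1 hv)
          exact hU i
      _ = t.toFinset.card * U := by rw [Finset.sum_const, smul_eq_mul]
  have hSdU : S ≤ d * U := le_trans hSle (Nat.mul_le_mul_right U hcard)
  rcases Nat.eq_zero_or_pos U with hU0 | hUpos
  · simp [hU0]
  · calc S / U ≤ (d * U) / U := Nat.div_le_div_right hSdU
      _ = d := Nat.mul_div_cancel d hUpos
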